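/- Let d : ℝᵐ → ℝ be ρ̲-strongly convex and differentiable with ρ̄-Lipschitz gradient, Y ⊆ ℝᵐ nonempty closed convex, and y⋆ the unique minimizer of d over Y. Then for every y ∈ Y, ‖y - y⋆‖ ≤ ((1 + ρ̄)/ρ̲)·‖y - proj_Y(y - ∇d(y))‖. -/

import Mathlib

open RealInnerProductSpace Set

section Aux

variable {E : Type*} [NormedAddCommGroup E] [InnerProductSpace ℝ E] [CompleteSpace E]

lemma aux_hasDerivAt_comp_line (f : E → ℝ) (hf : Differentiable ℝ f) (a v : E) (t : ℝ) :
    HasDerivAt (fun s : ℝ => f (a + s • v)) ⟪gradient f (a + t • v), v⟫ t := by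
  have hline : HasDerivAt (fun s : ℝ => a + s • v) v t := by
    simpa using ((hasDerivAt_id t).smul_const v).const_add a
  have h2 := (hf (a + t • v)).hasGradientAt.hasFDerivAt.comp_hasDerivAt t hline
  exact h2

lemma aux_strong_mono (d : E → ℝ) (ρlo : ℝ)
    (hsc : ConvexOn ℝ Set.univ (fun y => d y - (ρlo / 2) * ‖y‖ ^ 2))
    (hdiff : Differentiable ℝ d) (a b : E) :
    ρlo * ‖b - a‖ ^ 2 ≤ ⟪gradient d b - gradient d a, b - a⟫ := by
  set v := b - a with hv
  set ψ : ℝ → ℝ := fun t => d (a + t • v) - (ρlo / 2) * ‖a + t • v‖ ^ 2 with hψ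
  have hψc : ConvexOn ℝ Set.univ ψ := by
    have h := hsc.comp_affineMap (AffineMap.lineMap a b : ℝ →ᵃ[ℝ] E)
    simp only [Set.preimage_univ] at h
    convert h using 1
    all_goals try rfl
    funext t
    have harg : a + t • v = (AffineMap.lineMap a b : ℝ →ᵃ[ℝ] E) t := by
      rw [AffineMap.lineMap_apply_module]; rw [hv]; module
    simp only [Function.comp, hψ, harg]
  have hline : ∀ t : ℝ, HasDerivAt (fun s : ℝ => a + s • v) v t := fun t => by
    simpa using ((hasDerivAt_id t).smul_const v).const_add a
  have hψd : ∀ t : ℝ, HasDerivAt ψ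
      (⟪gradient d (a + t • v), v⟫ - (ρlo / 2) * (⟪a + t • v, v⟫ + ⟪v, a + t • v⟫)) t := by
    intro t
    have h1 := aux_hasDerivAt_comp_line d hdiff a v t
    have h2 : HasDerivAt (fun s : ℝ => ‖a + s • v‖ ^ 2)
        (⟪a + t • v, v⟫ + ⟪v, a + t • v⟫) t := by
      have := (hline t).inner ℝ (hline t)
      simpa [real_inner_self_eq_norm_sq] using this
    exact h1.sub ((h2.const_mul (ρlo / 2)))
  have h01 := hψc.le_slope_of_hasDerivAt (mem_univ (0:ℝ)) (mem_univ (1:ℝ)) one_pos (hψd 0)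
  have h10 := hψc.slope_le_of_hasDerivAt (mem_univ (0:ℝ)) (mem_univ (1:ℝ)) one_pos (hψd 1)
  have hD := h01.trans h10
  have e0 : a + (0:ℝ) • v = a := by simp
  have e1 : a + (1:ℝ) • v = b := by rw [hv]; simp
  rw [e0, e1] at hD
  have hsym : ⟪v, a⟫ = ⟪a, v⟫ := real_inner_comm _ _
  have hsym' : ⟪v, b⟫ = ⟪b, v⟫ := real_inner_comm _ _
  have hab : ⟪b, v⟫ - ⟪a, v⟫ = ⟪v, v⟫ := by rw [← inner_sub_left, ← hv]
  have hvv : ⟪v, v⟫ = ‖v‖ ^ 2 := real_inner_self_eq_norm_sq v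
  have hA : ρlo / 2 * (⟪a, v⟫ + ⟪v, a⟫) = ρlo * ⟪a, v⟫ := by rw [hsym]; ring
  have hB : ρlo / 2 * (⟪b, v⟫ + ⟪v, b⟫) = ρlo * ⟪b, v⟫ := by rw [hsym']; ring
  have hC : ρlo * ⟪b, v⟫ - ρlo * ⟪a, v⟫ = ρlo * ‖v‖ ^ 2 := by rw [← mul_sub, hab, hvv]
  rw [hA, hB] at hD
  rw [inner_sub_left]
  linarith

lemma aux_min_dir (f : E → ℝ) (hf : Differentiable ℝ f) (a v : E)
    (hge : ∀ t : ℝ, 0 ≤ t → t ≤ 1 → f a ≤ f (a + t • v)) :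
    0 ≤ ⟪gradient f a, v⟫ := by
  have hφ : HasDerivAt (fun s : ℝ => f (a + s • v)) ⟪gradient f a, v⟫ 0 := by
    simpa using aux_hasDerivAt_comp_line f hf a v 0
  have ht := hasDerivAt_iff_tendsto_slope.mp hφ
  have hsub : Set.Ioi (0:ℝ) ⊆ {(0:ℝ)}ᶜ :=
    fun x hx => Set.mem_compl_singleton_iff.mpr (ne_of_gt hx)
  have ht' := ht.mono_left (nhdsWithin_mono (0:ℝ) hsub)
  refine ge_of_tendsto ht' ?_
  filter_upwards [Ioc_mem_nhdsGT_of_mem (Set.mem_Ico.mpr ⟨le_refl (0:ℝ), one_pos⟩)] with t ht2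
  rw [slope_def_field]
  have h1 : f a ≤ f (a + t • v) := hge t ht2.1.le ht2.2
  have h0 : a + (0:ℝ) • v = a := by simp
  rw [h0, sub_zero]
  exact div_nonneg (by linarith) ht2.1.le

end Aux

theorem projected_gradient_error_bound
    {m : ℕ} (d : EuclideanSpace ℝ (Fin m) → ℝ) (ρlo ρhi : ℝ)
    (hρlo : 0 < ρlo) (hρhi : 0 < ρhi)
    (hsc : ConvexOn ℝ Set.univ (fun y => d y - (ρlo / 2) * ‖y‖ ^ 2))
    (hdiff : Differentiable ℝ d)
    (hLip : ∀ x y, ‖gradient d x - gradient d y‖ ≤ ρhi * ‖x - y‖)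
    (Y : Set (EuclideanSpace ℝ (Fin m)))
    (hYne : Y.Nonempty) (hYc : IsClosed Y) (hYconv : Convex ℝ Y)
    (proj : EuclideanSpace ℝ (Fin m) → EuclideanSpace ℝ (Fin m))
    (hproj : ∀ z, proj z ∈ Y ∧ ∀ w ∈ Y, ‖z - proj z‖ ≤ ‖z - w‖)
    (ystar : EuclideanSpace ℝ (Fin m))
    (hystar : ystar ∈ Y) (hmin : ∀ y ∈ Y, d ystar ≤ d y)
    (y : EuclideanSpace ℝ (Fin m)) (hy : y ∈ Y) :
    ‖y - ystar‖ ≤ ((1 + ρhi) / ρlo) * ‖y - proj (y - gradient d y)‖ := by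
  set g : EuclideanSpace ℝ (Fin m) → EuclideanSpace ℝ (Fin m) := gradient d with hg
  set p : EuclideanSpace ℝ (Fin m) := proj (y - g y) with hp
  obtain ⟨hpY, hpmin⟩ := hproj (y - g y)
  -- projection variational inequality
  have hVI : ∀ w ∈ Y, ⟪(y - g y) - p, w - p⟫ ≤ 0 := by
    letI : Nonempty Y := ⟨⟨p, hpY⟩⟩
    refine (norm_eq_iInf_iff_real_inner_le_zero hYconv hpY).mp ?_
    refine le_antisymm (le_ciInf fun w => hpmin w w.2) ?_
    exact ciInf_le ⟨0, fun x ⟨w, hw⟩ => hw ▸ norm_nonneg _⟩ (⟨p, hpY⟩ : Y)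
  -- first-order optimality at ystar
  have hopt : 0 ≤ ⟪g ystar, p - ystar⟫ := by
    refine aux_min_dir d hdiff ystar (p - ystar) (fun t ht0 ht1 => hmin _ ?_)
    have hmem := hYconv hystar hpY (by linarith : (0:ℝ) ≤ 1 - t) ht0 (by ring)
    convert hmem using 1
    rw [smul_sub, sub_smul, one_smul]
    abel
  -- strong monotonicity
  have hmono := aux_strong_mono d ρlo hsc hdiff ystar y
  -- abbreviations
  set t : ℝ := ‖y - ystar‖ with htt
  set r : ℝ := ‖y - p‖ with hrr
  -- K1
  have hK1 : ⟪g y - g ystar, y - p⟫ ≤ ρhi * t * r := by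
    calc ⟪g y - g ystar, y - p⟫ ≤ ‖g y - g ystar‖ * ‖y - p‖ := real_inner_le_norm _ _
    _ ≤ (ρhi * ‖y - ystar‖) * ‖y - p‖ :=
        mul_le_mul_of_nonneg_right (hLip y ystar) (norm_nonneg _)
    _ = ρhi * t * r := by rw [htt, hrr]
  -- K2 : from VI at ystar
  have hVI' := hVI ystar hystar
  have hK2 : ⟪g y - g ystar, p - ystar⟫ ≤ ⟪y - p, p - ystar⟫ := by
    have h1 : ⟪(y - p) - g y, ystar - p⟫ ≤ 0 := by
      have : (y - g y) - p = (y - p) - g y := by abel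
      rwa [this] at hVI'
    rw [inner_sub_left] at h1 ⊢
    have h2 : ⟪g y, ystar - p⟫ = -⟪g y, p - ystar⟫ := by
      rw [← inner_neg_right]; congr 1; abel
    have h3 : ⟪y - p, ystar - p⟫ = -⟪y - p, p - ystar⟫ := by
      rw [← inner_neg_right]; congr 1; abel
    rw [h2, h3] at h1
    linarith [hopt]
  -- K3
  have hK3 : ⟪y - p, p - ystar⟫ ≤ r * t := by
    have hsplit : (p - ystar : EuclideanSpace ℝ (Fin m)) = (y - ystar) - (y - p) := by abel
    rw [hsplit, inner_sub_right]
    have h4 : (0:ℝ) ≤ ⟪y - p, y - p⟫ := real_inner_self_nonneg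
    have h5 : ⟪y - p, y - ystar⟫ ≤ r * t := by
      calc ⟪y - p, y - ystar⟫ ≤ ‖y - p‖ * ‖y - ystar‖ := real_inner_le_norm _ _
      _ = r * t := by rw [htt, hrr]
    linarith
  -- combine
  have hsum : ⟪g y - g ystar, y - ystar⟫
      = ⟪g y - g ystar, y - p⟫ + ⟪g y - g ystar, p - ystar⟫ := by
    rw [← inner_add_right]; congr 1; abel
  have hkey : ρlo * t ^ 2 ≤ (1 + ρhi) * r * t := by
    have := hmono
    rw [hsum] at this
    nlinarith [hK1, hK2, hK3]
  -- conclude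
  rw [div_mul_eq_mul_div, le_div_iff₀ hρlo]
  rcases eq_or_lt_of_le (norm_nonneg (y - ystar)) with h0 | h0
  · have h0' : t = 0 := h0.symm
    rw [h0', zero_mul]
    have : (0:ℝ) ≤ r := norm_nonneg _
    nlinarith
  · have ht0 : 0 < t := h0
    nlinarith [hkey, ht0]
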